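/- Let D₀ = [[1,2,0],[0,0,1],[0,0,0]] and D₁ = [[0,0,0],[2,0,0],[0,1,2]]. For every real number t, lim_{k→∞} (1/k)·ln((1/2^k) ∑_{z∈{0,1}^k} ‖D_z‖^t) = ln((2^t + 1)/2). In particular the generalized Lyapunov exponent for these quadrinomial transfer matrices coincides with that of the binomial case. -/

import Mathlib

/-- The transfer matrices for counting odd coefficients of `(1+x+x²+x³)^n`. -/
noncomputable def quadD0 : Matrix (Fin 3) (Fin 3) ℝ := !![1, 2, 0; 0, 0, 1; 0, 0, 0]

noncomputable def quadD1 : Matrix (Fin 3) (Fin 3) ℝ := !![0, 0, 0; 2, 0, 0; 0, 1, 2]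

/-- The ordered product `D_{z₀} D_{z₁} ⋯ D_{z_{k−1}}` along a binary word `z`
(`false ↦ D₀`, `true ↦ D₁`). -/
noncomputable def quadProd {k : ℕ} (z : Fin k → Bool) : Matrix (Fin 3) (Fin 3) ℝ :=
  (List.ofFn fun i => if z i then quadD1 else quadD0).prod

/-- The entrywise ℓ¹ matrix norm: the sum of the absolute values of the entries. -/
noncomputable def quadNorm (A : Matrix (Fin 3) (Fin 3) ℝ) : ℝ := ∑ i, ∑ j, |A i j|

/-- column sums of the product -/
noncomputable def qcol {k : ℕ} (z : Fin k → Bool) (j : Fin 3) : ℝ := ∑ i, quadProd z i j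

lemma quadProd_snoc {k : ℕ} (z : Fin k → Bool) (b : Bool) :
    quadProd (Fin.snoc z b) = quadProd z * (if b then quadD1 else quadD0) := by
  unfold quadProd
  rw [List.ofFn_succ']
  simp only [Fin.snoc_castSucc, Fin.snoc_last, List.concat_eq_append, List.prod_append,
    List.prod_cons, List.prod_nil, mul_one]

lemma sum_snoc {k : ℕ} (f : (Fin (k+1) → Bool) → ℝ) :
    ∑ z : Fin (k+1) → Bool, f z = ∑ z : Fin k → Bool, ∑ b : Bool, f (Fin.snoc z b) := by
  rw [← (Fin.snocEquiv (fun _ => Bool)).sum_comp f, Fintype.sum_prod_type, Finset.sum_comm]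
  simp [Fin.snocEquiv]

lemma quadD0_nonneg (i j : Fin 3) : 0 ≤ quadD0 i j := by
  fin_cases i <;> fin_cases j <;> norm_num [quadD0]

lemma quadD1_nonneg (i j : Fin 3) : 0 ≤ quadD1 i j := by
  fin_cases i <;> fin_cases j <;> norm_num [quadD1]

lemma list_prod_entry_nonneg : ∀ (l : List (Matrix (Fin 3) (Fin 3) ℝ)),
    (∀ M ∈ l, ∀ i j, 0 ≤ M i j) → ∀ i j, 0 ≤ l.prod i j := by
  intro l
  induction l with
  | nil =>
      intro _ i j
      simp only [List.prod_nil]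
      rw [Matrix.one_apply]
      split <;> norm_num
  | cons M l ih =>
      intro h i j
      rw [List.prod_cons, Matrix.mul_apply]
      apply Finset.sum_nonneg
      intro x _
      exact mul_nonneg (h M List.mem_cons_self i x)
        (ih (fun N hN => h N (List.mem_cons_of_mem _ hN)) x j)

lemma quadProd_entry_nonneg {k : ℕ} (z : Fin k → Bool) (i j : Fin 3) :
    0 ≤ quadProd z i j := by
  apply list_prod_entry_nonneg
  intro M hM i j
  rw [List.mem_ofFn] at hM
  obtain ⟨x, rfl⟩ := hM
  split
  · exact quadD1_nonneg i j
  · exact quadD0_nonneg i j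

lemma qcol_mul {k : ℕ} (z : Fin k → Bool) (D : Matrix (Fin 3) (Fin 3) ℝ) (j : Fin 3) :
    (∑ i, (quadProd z * D) i j) = ∑ l, qcol z l * D l j := by
  simp only [Matrix.mul_apply]
  rw [Finset.sum_comm]
  simp only [qcol, Finset.sum_mul]

lemma qcol_snoc_false {k : ℕ} (z : Fin k → Bool) :
    qcol (Fin.snoc z false) = ![qcol z 0, 2 * qcol z 0, qcol z 1] := by
  funext j
  rw [show qcol (Fin.snoc z false) j = ∑ i, (quadProd z * quadD0) i j by
    simp [qcol, quadProd_snoc], qcol_mul]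
  fin_cases j <;> simp [quadD0, Fin.sum_univ_three, Matrix.vecHead, Matrix.vecTail] <;> ring

lemma qcol_snoc_true {k : ℕ} (z : Fin k → Bool) :
    qcol (Fin.snoc z true) = ![2 * qcol z 1, qcol z 2, 2 * qcol z 2] := by
  funext j
  rw [show qcol (Fin.snoc z true) j = ∑ i, (quadProd z * quadD1) i j by
    simp [qcol, quadProd_snoc], qcol_mul]
  fin_cases j <;> simp [quadD1, Fin.sum_univ_three, Matrix.vecHead, Matrix.vecTail] <;> ring

lemma qcol_pos {k : ℕ} (z : Fin k → Bool) (j : Fin 3) : 0 < qcol z j := by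
  revert j
  induction k with
  | zero =>
      intro j
      have : quadProd z = 1 := by simp [quadProd]
      simp only [qcol, this]
      rw [Fin.sum_univ_three]
      fin_cases j <;> simp [Matrix.one_apply] <;> norm_num
  | succ n ih =>
      induction z using Fin.snocCases with
      | snoc zs b =>
        intro j
        cases b
        · rw [qcol_snoc_false]
          fin_cases j
          · simpa using ih zs 0
          · simpa using mul_pos (by norm_num : (0:ℝ) < 2) (ih zs 0)
          · simpa using ih zs 1
        · rw [qcol_snoc_true]
          fin_cases j
          · simpa using mul_pos (by norm_num : (0:ℝ) < 2) (ih zs 1)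
          · simpa using ih zs 2
          · simpa using mul_pos (by norm_num : (0:ℝ) < 2) (ih zs 2)

lemma qsum (t : ℝ) : ∀ (k : ℕ) (j : Fin 3),
    ∑ z : Fin k → Bool, (qcol z j) ^ t = ((2:ℝ)^t + 1)^k := by
  intro k
  induction k with
  | zero =>
      intro j
      rw [Finset.sum_congr rfl (fun z _ => by
        have : quadProd z = 1 := by simp [quadProd]
        have hq : qcol z j = 1 := by
          simp only [qcol, this]
          fin_cases j <;> simp [Fin.sum_univ_three, Matrix.one_apply]
        rw [hq, Real.one_rpow])]
      simp
  | succ n ih =>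
      intro j
      rw [sum_snoc]
      have key : ∀ z : Fin n → Bool,
          ∑ b : Bool, (qcol (Fin.snoc z b) j) ^ t
            = (2:ℝ)^t * ((qcol z) (![1,0,2] j)) ^ t + ((qcol z) (![0,2,1] j)) ^ t := by
        intro z
        rw [Fintype.sum_bool, qcol_snoc_true, qcol_snoc_false]
        have h2 : (0:ℝ) ≤ 2 := by norm_num
        fin_cases j <;>
          simp [Real.mul_rpow h2 (qcol_pos z _).le] <;> ring
      rw [Finset.sum_congr rfl (fun z _ => key z), Finset.sum_add_distrib,
        ← Finset.mul_sum, ih, ih]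
      ring

lemma quadNorm_prod_eq {k : ℕ} (z : Fin k → Bool) :
    quadNorm (quadProd z) = qcol z 0 + qcol z 1 + qcol z 2 := by
  unfold quadNorm
  rw [Finset.sum_comm, Fin.sum_univ_three]
  have : ∀ j : Fin 3, ∑ i, |quadProd z i j| = qcol z j := by
    intro j
    unfold qcol
    exact Finset.sum_congr rfl fun i _ => abs_of_nonneg (quadProd_entry_nonneg z i j)
  rw [this 0, this 1, this 2]

lemma quadNorm_prod_pos {k : ℕ} (z : Fin k → Bool) : 0 < quadNorm (quadProd z) := by
  rw [quadNorm_prod_eq]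
  have := qcol_pos z 0; have := qcol_pos z 1; have := qcol_pos z 2
  linarith

/-- upper bound, t ≥ 0 -/
lemma upper_nonneg {t : ℝ} (ht : 0 ≤ t) {k : ℕ} (z : Fin k → Bool) :
    quadNorm (quadProd z) ^ t
      ≤ (3:ℝ)^t * ((qcol z 0)^t + (qcol z 1)^t + (qcol z 2)^t) := by
  set q0 := qcol z 0; set q1 := qcol z 1; set q2 := qcol z 2
  have h0 := qcol_pos z 0; have h1 := qcol_pos z 1; have h2 := qcol_pos z 2
  set m := max q0 (max q1 q2) with hm
  have hm0 : (0:ℝ) ≤ m := le_trans h0.le (le_max_left _ _)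
  have hN : quadNorm (quadProd z) ≤ 3 * m := by
    rw [quadNorm_prod_eq]
    have := le_max_left q0 (max q1 q2)
    have := le_trans (le_max_left q1 q2) (le_max_right q0 (max q1 q2))
    have := le_trans (le_max_right q1 q2) (le_max_right q0 (max q1 q2))
    linarith
  calc quadNorm (quadProd z) ^ t ≤ (3*m)^t :=
        Real.rpow_le_rpow (quadNorm_prod_pos z).le hN ht
    _ = (3:ℝ)^t * m^t := Real.mul_rpow (by norm_num) hm0
    _ ≤ (3:ℝ)^t * (q0^t + q1^t + q2^t) := by
        apply mul_le_mul_of_nonneg_left _ (Real.rpow_nonneg (by norm_num) t)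
        have e0 : (0:ℝ) ≤ q0^t := Real.rpow_nonneg h0.le t
        have e1 : (0:ℝ) ≤ q1^t := Real.rpow_nonneg h1.le t
        have e2 : (0:ℝ) ≤ q2^t := Real.rpow_nonneg h2.le t
        have hmm : m = q0 ∨ m = q1 ∨ m = q2 := by
          rcases max_choice q1 q2 with h | h <;> rcases max_choice q0 (max q1 q2) with h' | h' <;>
            rw [hm, h'] <;> simp [h]
        rcases hmm with h | h | h <;> rw [h] <;> linarith

/-- upper bound, t ≤ 0 -/
lemma upper_nonpos {t : ℝ} (ht : t ≤ 0) {k : ℕ} (z : Fin k → Bool) :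
    quadNorm (quadProd z) ^ t ≤ (qcol z 2)^t := by
  apply Real.rpow_le_rpow_of_nonpos (qcol_pos z 2) _ ht
  rw [quadNorm_prod_eq]
  have := qcol_pos z 0; have := qcol_pos z 1
  linarith

/-- any t, lower bound pointwise by the j=2 component for t ≥ 0 -/
lemma lower_nonneg {t : ℝ} (ht : 0 ≤ t) {k : ℕ} (z : Fin k → Bool) :
    (qcol z 2)^t ≤ quadNorm (quadProd z) ^ t := by
  apply Real.rpow_le_rpow (qcol_pos z 2).le _ ht
  rw [quadNorm_prod_eq]
  have := qcol_pos z 0; have := qcol_pos z 1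
  linarith

lemma quadNorm_snoc_true_true {k : ℕ} (z : Fin k → Bool) :
    quadNorm (quadProd (Fin.snoc (Fin.snoc z true) true)) = 8 * qcol z 2 := by
  rw [quadNorm_prod_eq, qcol_snoc_true, qcol_snoc_true]
  simp
  ring

lemma S_pos (t : ℝ) (k : ℕ) : 0 < ∑ z : Fin k → Bool, quadNorm (quadProd z) ^ t :=
  Finset.sum_pos (fun z _ => Real.rpow_pos_of_pos (quadNorm_prod_pos z) t)
    Finset.univ_nonempty

lemma S_upper (t : ℝ) (k : ℕ) :
    ∑ z : Fin k → Bool, quadNorm (quadProd z) ^ t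
      ≤ (3 * (3:ℝ)^t + 1) * ((2:ℝ)^t + 1)^k := by
  have hlam : (0:ℝ) < ((2:ℝ)^t + 1)^k :=
    pow_pos (by positivity) k
  have h3 : (0:ℝ) < (3:ℝ)^t := Real.rpow_pos_of_pos (by norm_num) t
  rcases le_or_gt 0 t with ht | ht
  · calc ∑ z : Fin k → Bool, quadNorm (quadProd z) ^ t
        ≤ ∑ z : Fin k → Bool,
            (3:ℝ)^t * ((qcol z 0)^t + (qcol z 1)^t + (qcol z 2)^t) :=
          Finset.sum_le_sum fun z _ => upper_nonneg ht z
      _ = (3:ℝ)^t * (((2:ℝ)^t + 1)^k + ((2:ℝ)^t + 1)^k + ((2:ℝ)^t + 1)^k) := by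
          rw [← Finset.mul_sum]
          congr 1
          rw [Finset.sum_add_distrib, Finset.sum_add_distrib, qsum, qsum, qsum]
      _ ≤ (3 * (3:ℝ)^t + 1) * ((2:ℝ)^t + 1)^k := by nlinarith
  · calc ∑ z : Fin k → Bool, quadNorm (quadProd z) ^ t
        ≤ ∑ z : Fin k → Bool, (qcol z 2)^t :=
          Finset.sum_le_sum fun z _ => upper_nonpos ht.le z
      _ = ((2:ℝ)^t + 1)^k := qsum t k 2
      _ ≤ (3 * (3:ℝ)^t + 1) * ((2:ℝ)^t + 1)^k := by nlinarith

lemma S_lower (t : ℝ) (k : ℕ) :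
    (8:ℝ)^t * ((2:ℝ)^t + 1)^k
      ≤ ∑ z : Fin (k+2) → Bool, quadNorm (quadProd z) ^ t := by
  have h1 : ∑ z : Fin (k+2) → Bool, quadNorm (quadProd z) ^ t
      = ∑ z : Fin k → Bool, ∑ b1 : Bool, ∑ b2 : Bool,
          quadNorm (quadProd (Fin.snoc (Fin.snoc z b1) b2)) ^ t := by
    rw [sum_snoc (f := fun z => quadNorm (quadProd z) ^ t),
      sum_snoc (f := fun z => ∑ b : Bool, quadNorm (quadProd (Fin.snoc z b)) ^ t)]
  rw [h1]
  have h2 : (8:ℝ)^t * ((2:ℝ)^t + 1)^k = ∑ z : Fin k → Bool, (8:ℝ)^t * (qcol z 2)^t := by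
    rw [← Finset.mul_sum, qsum]
  rw [h2]
  apply Finset.sum_le_sum
  intro z _
  have e1 : (0:ℝ) ≤ quadNorm (quadProd (Fin.snoc (Fin.snoc z true) false)) ^ t :=
    (Real.rpow_pos_of_pos (quadNorm_prod_pos _) t).le
  have e2 : (0:ℝ) ≤ quadNorm (quadProd (Fin.snoc (Fin.snoc z false) true)) ^ t :=
    (Real.rpow_pos_of_pos (quadNorm_prod_pos _) t).le
  have e3 : (0:ℝ) ≤ quadNorm (quadProd (Fin.snoc (Fin.snoc z false) false)) ^ t :=
    (Real.rpow_pos_of_pos (quadNorm_prod_pos _) t).le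
  have h88 : quadNorm (quadProd (Fin.snoc (Fin.snoc z true) true)) ^ t
      = (8:ℝ)^t * (qcol z 2)^t := by
    rw [quadNorm_snoc_true_true, Real.mul_rpow (by norm_num) (qcol_pos z 2).le]
  rw [Fintype.sum_bool, Fintype.sum_bool, Fintype.sum_bool]
  linarith [h88]

/-- The generalized (moment) Lyapunov exponent
`L(t) = lim_k (1/k) ln E(‖D_{z₀}⋯D_{z_{k−1}}‖^t)` for the quadrinomial transfer matrices
equals `ln((2^t+1)/2)`, the same as in the binomial case. -/
theorem quadrinomial_generalized_lyapunov (t : ℝ) :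
    Filter.Tendsto
      (fun k : ℕ =>
        (1 / (k : ℝ)) * Real.log
          ((1 / 2 ^ k) * ∑ z : Fin k → Bool, quadNorm (quadProd z) ^ t))
      Filter.atTop (nhds (Real.log (((2 : ℝ) ^ t + 1) / 2))) := by
  have h2t : (0:ℝ) < (2:ℝ)^t := Real.rpow_pos_of_pos (by norm_num) t
  set lam : ℝ := (2:ℝ)^t + 1 with hlamdef
  have hlam : 0 < lam := by positivity
  set C : ℝ := 3*(3:ℝ)^t + 1 with hCdef
  have h3t : (0:ℝ) < (3:ℝ)^t := Real.rpow_pos_of_pos (by norm_num) t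
  have hC : 0 < C := by positivity
  set a : ℝ := (8:ℝ)^t / lam^2 with hadef
  have h8t : (0:ℝ) < (8:ℝ)^t := Real.rpow_pos_of_pos (by norm_num) t
  have ha : 0 < a := by positivity
  apply tendsto_of_tendsto_of_tendsto_of_le_of_le'
    (g := fun k : ℕ => Real.log a * (1/(k:ℝ)) + Real.log (lam/2))
    (h := fun k : ℕ => Real.log C * (1/(k:ℝ)) + Real.log (lam/2))
  · simpa using
      (tendsto_one_div_atTop_nhds_zero_nat.const_mul (Real.log a)).add
        (tendsto_const_nhds (x := Real.log (lam/2)))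
  · simpa using
      (tendsto_one_div_atTop_nhds_zero_nat.const_mul (Real.log C)).add
        (tendsto_const_nhds (x := Real.log (lam/2)))
  · -- lower bound, eventually k ≥ 2
    filter_upwards [Filter.eventually_ge_atTop 2] with k hk
    obtain ⟨m, rfl⟩ : ∃ m, k = m + 2 := ⟨k - 2, by omega⟩
    set S : ℝ := ∑ z : Fin (m+2) → Bool, quadNorm (quadProd z) ^ t with hSdef
    have hS : 0 < S := S_pos t (m+2)
    have hkpos : (0:ℝ) < ((m+2 : ℕ) : ℝ) := by positivity
    have hSlow : a * lam ^ (m+2) ≤ S := by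
      have := S_lower t m
      calc a * lam ^ (m+2) = (8:ℝ)^t * lam ^ m := by
            rw [hadef, pow_add]
            field_simp
        _ ≤ S := this
    have h1 : a * (lam/2) ^ (m+2) ≤ (1/2^(m+2)) * S := by
      rw [div_pow]
      calc a * (lam ^ (m+2) / 2 ^ (m+2))
          = (1 / 2^(m+2)) * (a * lam ^ (m+2)) := by ring
        _ ≤ (1 / 2^(m+2)) * S := mul_le_mul_of_nonneg_left hSlow (by positivity)
    have hlog : Real.log a + ((m+2 : ℕ) : ℝ) * Real.log (lam/2)
        ≤ Real.log ((1/2^(m+2)) * S) := by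
      have := Real.log_le_log (by positivity : (0:ℝ) < a * (lam/2) ^ (m+2)) h1
      rwa [Real.log_mul ha.ne' (by positivity), Real.log_pow] at this
    have := mul_le_mul_of_nonneg_left hlog (by positivity : (0:ℝ) ≤ 1/((m+2:ℕ):ℝ))
    calc Real.log a * (1/((m+2:ℕ):ℝ)) + Real.log (lam/2)
        = (1/((m+2:ℕ):ℝ)) * (Real.log a + ((m+2:ℕ):ℝ) * Real.log (lam/2)) := by
          field_simp
      _ ≤ (1/((m+2:ℕ):ℝ)) * Real.log ((1/2^(m+2)) * S) := this
  · -- upper bound, eventually k ≥ 1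
    filter_upwards [Filter.eventually_ge_atTop 1] with k hk
    set S : ℝ := ∑ z : Fin k → Bool, quadNorm (quadProd z) ^ t with hSdef
    have hS : 0 < S := S_pos t k
    have hkpos : (0:ℝ) < (k : ℝ) := by
      have : (1:ℝ) ≤ (k:ℝ) := by exact_mod_cast hk
      linarith
    have h1 : (1/2^k) * S ≤ C * (lam/2) ^ k := by
      rw [div_pow]
      have hup := S_upper t k
      calc (1 / 2^k : ℝ) * S ≤ (1 / 2^k : ℝ) * (C * lam ^ k) :=
            mul_le_mul_of_nonneg_left hup (by positivity)
        _ = C * (lam ^ k / 2 ^ k) := by ring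
    have hlog : Real.log ((1/2^k) * S)
        ≤ Real.log C + (k : ℝ) * Real.log (lam/2) := by
      have := Real.log_le_log (by positivity : (0:ℝ) < (1/2^k) * S) h1
      rwa [Real.log_mul hC.ne' (by positivity), Real.log_pow] at this
    have := mul_le_mul_of_nonneg_left hlog (by positivity : (0:ℝ) ≤ 1/(k:ℝ))
    calc (1/(k:ℝ)) * Real.log ((1/2^k) * S)
        ≤ (1/(k:ℝ)) * (Real.log C + (k:ℝ) * Real.log (lam/2)) := this
      _ = Real.log C * (1/(k:ℝ)) + Real.log (lam/2) := by
          field_simp
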